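/- Define ≲ on G = GL(n,ℤ) by a ≲ ab iff for all x ∈ ℤⁿ: 0 < x and 0 < xab imply 0 < xa (lexicographic order). Then a ~ ab (i.e., a ≲ ab and ab ≲ a) holds if and only if b ∈ H, where H is the subgroup of G of elements preserving the lexicographic order on ℤⁿ (upper triangular integer matrices with diagonal entries +1). -/
import Mathlib


/-- `x > 0` in the standard lexicographic order on `ℤⁿ`. -/
def lexPos {n : ℕ} (x : Fin n → ℤ) : Prop :=
  ∃ i, (∀ j, j < i → x j = 0) ∧ 0 < x i

/-- `a ≲ c` (for `c = ab`): for all `x`, `0 < x` and `0 < xc` imply `0 < xa`. -/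
def Lesim {n : ℕ} (a c : Matrix.GeneralLinearGroup (Fin n) ℤ) : Prop :=
  ∀ x : Fin n → ℤ, lexPos x →
    lexPos (Matrix.vecMul x (c : Matrix (Fin n) (Fin n) ℤ)) →
    lexPos (Matrix.vecMul x (a : Matrix (Fin n) (Fin n) ℤ))

lemma lexPos_ne_zero {n : ℕ} {y : Fin n → ℤ} (h : lexPos y) : y ≠ 0 := by
  rintro rfl
  obtain ⟨i, -, hi⟩ := h
  simp at hi

lemma not_lexPos_neg {n : ℕ} {y : Fin n → ℤ} (h : lexPos y) : ¬ lexPos (-y) := by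
  rintro ⟨i', hz', hi'⟩
  obtain ⟨i, hz, hi⟩ := h
  simp only [Pi.neg_apply] at hi' hz'
  rcases lt_trichotomy i i' with hlt | rfl | hlt
  · have := hz' i hlt; omega
  · omega
  · have := hz i' hlt; omega

lemma lexPos_or_neg {n : ℕ} {y : Fin n → ℤ} (h : y ≠ 0) : lexPos y ∨ lexPos (-y) := by
  classical
  have hex : ∃ i, y i ≠ 0 := by
    by_contra h'; push_neg at h'; exact h (funext h')
  let S : Finset (Fin n) := Finset.univ.filter (fun i => y i ≠ 0)
  have hS : S.Nonempty := ⟨hex.choose, by simp [S, hex.choose_spec]⟩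
  set i := S.min' hS with hidef
  have hi : y i ≠ 0 := by
    have := S.min'_mem hS
    simpa [S] using this
  have hz : ∀ j, j < i → y j = 0 := by
    intro j hj
    by_contra hyj
    have : i ≤ j := S.min'_le j (by simp [S, hyj])
    exact absurd hj (not_lt.2 this)
  rcases hi.lt_or_gt with hneg | hpos
  · right
    exact ⟨i, fun j hj => by simp [hz j hj], by simpa using hneg⟩
  · left; exact ⟨i, hz, hpos⟩

lemma vecMul_ne_zero {n : ℕ} (M : Matrix.GeneralLinearGroup (Fin n) ℤ)
    {x : Fin n → ℤ} (hx : x ≠ 0) :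
    Matrix.vecMul x (M : Matrix (Fin n) (Fin n) ℤ) ≠ 0 := by
  intro h
  apply hx
  have h2 := congrArg (fun v => Matrix.vecMul v ((M⁻¹ : Matrix.GeneralLinearGroup (Fin n) ℤ) :
    Matrix (Fin n) (Fin n) ℤ)) h
  simp only [Matrix.vecMul_vecMul, Matrix.zero_vecMul] at h2
  have hMM : (M : Matrix (Fin n) (Fin n) ℤ) *
      ((M⁻¹ : Matrix.GeneralLinearGroup (Fin n) ℤ) : Matrix (Fin n) (Fin n) ℤ) = 1 := M.mul_inv
  rw [hMM, Matrix.vecMul_one] at h2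
  exact h2

/-- `a ∼ ab` (i.e. `a ≲ ab` and `ab ≲ a`) iff `b` preserves the
lexicographic order on `ℤⁿ`. -/
theorem stmt9 {n : ℕ} (a b : Matrix.GeneralLinearGroup (Fin n) ℤ) :
    (Lesim a (a * b) ∧ Lesim (a * b) a) ↔
      (∀ x : Fin n → ℤ,
        lexPos x ↔ lexPos (Matrix.vecMul x (b : Matrix (Fin n) (Fin n) ℤ))) := by
  have hab : ((a * b : Matrix.GeneralLinearGroup (Fin n) ℤ) : Matrix (Fin n) (Fin n) ℤ)
      = (a : Matrix (Fin n) (Fin n) ℤ) * (b : Matrix (Fin n) (Fin n) ℤ) := rfl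
  have haa : ∀ y : Fin n → ℤ,
      Matrix.vecMul (Matrix.vecMul y ((a⁻¹ : Matrix.GeneralLinearGroup (Fin n) ℤ) :
        Matrix (Fin n) (Fin n) ℤ)) (a : Matrix (Fin n) (Fin n) ℤ) = y := by
    intro y
    rw [Matrix.vecMul_vecMul]
    have : ((a⁻¹ : Matrix.GeneralLinearGroup (Fin n) ℤ) : Matrix (Fin n) (Fin n) ℤ) *
        (a : Matrix (Fin n) (Fin n) ℤ) = 1 := a.inv_mul
    rw [this, Matrix.vecMul_one]
  constructor
  · rintro ⟨h1, h2⟩ y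
    set x := Matrix.vecMul y ((a⁻¹ : Matrix.GeneralLinearGroup (Fin n) ℤ) :
      Matrix (Fin n) (Fin n) ℤ) with hx
    have hxa : Matrix.vecMul x (a : Matrix (Fin n) (Fin n) ℤ) = y := haa y
    have hxab : Matrix.vecMul x ((a * b : Matrix.GeneralLinearGroup (Fin n) ℤ) :
        Matrix (Fin n) (Fin n) ℤ) = Matrix.vecMul y (b : Matrix (Fin n) (Fin n) ℤ) := by
      rw [hab, ← Matrix.vecMul_vecMul, hxa]
    constructor
    · intro hy
      have hyne : y ≠ 0 := lexPos_ne_zero hy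
      have hxne : x ≠ 0 := by
        intro h0
        apply hyne
        rw [← hxa, h0, Matrix.zero_vecMul]
      rcases lexPos_or_neg hxne with hxp | hxn
      · -- use h2 : Lesim (a*b) a
        have := h2 x hxp (by rwa [hxa])
        rwa [hxab] at this
      · -- use h1 on -x
        by_contra hnyb
        have hybne : Matrix.vecMul y (b : Matrix (Fin n) (Fin n) ℤ) ≠ 0 :=
          vecMul_ne_zero b hyne
        rcases lexPos_or_neg hybne with hp | hnp
        · exact hnyb hp
        · have hnxab : Matrix.vecMul (-x) ((a * b : Matrix.GeneralLinearGroup (Fin n) ℤ) :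
              Matrix (Fin n) (Fin n) ℤ) = -(Matrix.vecMul y (b : Matrix (Fin n) (Fin n) ℤ)) := by
            rw [Matrix.neg_vecMul, hxab]
          have := h1 (-x) hxn (by rwa [hnxab])
          rw [Matrix.neg_vecMul, hxa] at this
          exact not_lexPos_neg hy this
    · intro hyb
      have hybne : Matrix.vecMul y (b : Matrix (Fin n) (Fin n) ℤ) ≠ 0 := lexPos_ne_zero hyb
      have hyne : y ≠ 0 := by
        intro h0
        apply hybne
        rw [h0, Matrix.zero_vecMul]
      have hxne : x ≠ 0 := by
        intro h0
        apply hyne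
        rw [← hxa, h0, Matrix.zero_vecMul]
      rcases lexPos_or_neg hxne with hxp | hxn
      · have := h1 x hxp (by rwa [hxab])
        rwa [hxa] at this
      · by_contra hny
        rcases lexPos_or_neg hyne with hp | hnp
        · exact hny hp
        · have := h2 (-x) hxn (by rwa [Matrix.neg_vecMul, hxa])
          rw [Matrix.neg_vecMul, hxab] at this
          exact not_lexPos_neg hyb this
  · intro hb
    constructor
    · intro x hx hxab
      rw [hab, ← Matrix.vecMul_vecMul] at hxab
      exact (hb _).2 hxab
    · intro x hx hxa
      rw [hab, ← Matrix.vecMul_vecMul]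
      exact (hb _).1 hxa
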